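/- Let τ(X) = -P·Xᵀ·P⁻¹ on sl(3,ℂ) with P = [[0,1,0],[-1,0,0],[0,0,1]]. Then the (-i)-eigenspace { X ∈ sl(3,ℂ) : τ(X) = -i·X } equals { [[0,0,-ia],[0,0,b],[-ib,a,0]] : a,b ∈ ℂ }, the (+i)-eigenspace { X : τ(X) = i·X } equals { [[0,0,ia],[0,0,b],[ib,a,0]] : a,b ∈ ℂ }, and the (+i)-eigenspace is the image of the (-i)-eigenspace under the map X ↦ -X* (negative conjugate transpose). -/
import Mathlib


open Matrix

noncomputable section

/-- The matrix `P = [[0,1,0],[-1,0,0],[0,0,1]]`. -/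
def Pmat : Matrix (Fin 3) (Fin 3) ℂ := !![0,1,0; -1,0,0; 0,0,1]

/-- `τ(X) = -P ⬝ Xᵀ ⬝ P⁻¹`. -/
def tauLie (X : Matrix (Fin 3) (Fin 3) ℂ) : Matrix (Fin 3) (Fin 3) ℂ :=
  -(Pmat * Xᵀ * Pmat⁻¹)

/-- The `(-i)`-eigenspace of `τ` on `sl(3,ℂ)`. -/
def Eneg : Set (Matrix (Fin 3) (Fin 3) ℂ) :=
  {X | X.trace = 0 ∧ tauLie X = -(Complex.I • X)}

/-- The `(+i)`-eigenspace of `τ` on `sl(3,ℂ)`. -/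
def Epos : Set (Matrix (Fin 3) (Fin 3) ℂ) :=
  {X | X.trace = 0 ∧ tauLie X = Complex.I • X}

lemma Pinv : Pmat⁻¹ = !![0,-1,0; 1,0,0; 0,0,1] := by
  apply inv_eq_right_inv
  rw [Pmat, Matrix.mul_fin_three, Matrix.one_fin_three]
  norm_num

lemma tau_entries (X : Matrix (Fin 3) (Fin 3) ℂ) :
    tauLie X = !![-X 1 1, X 0 1, -X 2 1; X 1 0, -X 0 0, X 2 0; -X 1 2, X 0 2, -X 2 2] := by
  have hX : Xᵀ = !![X 0 0, X 1 0, X 2 0; X 0 1, X 1 1, X 2 1; X 0 2, X 1 2, X 2 2] := by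
    rw [Matrix.eta_fin_three Xᵀ]; rfl
  rw [tauLie, Pinv, Pmat, hX, Matrix.mul_fin_three, Matrix.mul_fin_three]
  ext i j
  fin_cases i <;> fin_cases j <;> simp <;> ring_nf <;> simp [Complex.I_sq]

lemma Eneg_eq : Eneg = {X | ∃ a b : ℂ,
    X = !![0, 0, -(Complex.I * a); 0, 0, b; -(Complex.I * b), a, 0]} := by
  ext X
  simp only [Eneg, Set.mem_setOf_eq]
  constructor
  · rintro ⟨ht, he⟩
    rw [tau_entries] at he
    have h := fun i j => (Matrix.ext_iff.mpr he) i j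
    have h00 := h 0 0; have h01 := h 0 1; have h02 := h 0 2
    have h10 := h 1 0; have h11 := h 1 1; have h12 := h 1 2
    have h20 := h 2 0; have h21 := h 2 1; have h22 := h 2 2
    simp at h00 h01 h02 h10 h11 h12 h20 h21 h22
    refine ⟨X 2 1, X 1 2, ?_⟩
    ext i j
    fin_cases i <;> fin_cases j <;> simp
    · linear_combination (Complex.I/2)*h00 + (1/2)*h11 + (X 0 0/2) * Complex.I_sq
    · linear_combination ((1-Complex.I)/2)*h01 + (X 0 1/2) * Complex.I_sq
    · linear_combination h21
    · linear_combination ((1-Complex.I)/2)*h10 + (X 1 0/2) * Complex.I_sq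
    · linear_combination (1/2)*h00 + (Complex.I/2)*h11 + (X 1 1/2) * Complex.I_sq
    · linear_combination h12
    · linear_combination ((1+Complex.I)/2)*h22 + (X 2 2/2) * Complex.I_sq
  · rintro ⟨a, b, rfl⟩
    constructor
    · simp [Matrix.trace_fin_three]
    · rw [tau_entries]
      ext i j
      fin_cases i <;> fin_cases j <;> simp <;> ring_nf <;> simp [Complex.I_sq]

lemma Epos_eq : Epos = {X | ∃ a b : ℂ,
    X = !![0, 0, Complex.I * a; 0, 0, b; Complex.I * b, a, 0]} := by
  ext X
  simp only [Epos, Set.mem_setOf_eq]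
  constructor
  · rintro ⟨ht, he⟩
    rw [tau_entries] at he
    have h := fun i j => (Matrix.ext_iff.mpr he) i j
    have h00 := h 0 0; have h01 := h 0 1; have h02 := h 0 2
    have h10 := h 1 0; have h11 := h 1 1; have h12 := h 1 2
    have h20 := h 2 0; have h21 := h 2 1; have h22 := h 2 2
    simp at h00 h01 h02 h10 h11 h12 h20 h21 h22
    refine ⟨X 2 1, X 1 2, ?_⟩
    ext i j
    fin_cases i <;> fin_cases j <;> simp
    · linear_combination (Complex.I/2)*h00 + (-1/2)*h11 + (X 0 0/2) * Complex.I_sq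
    · linear_combination ((1+Complex.I)/2)*h01 + (X 0 1/2) * Complex.I_sq
    · linear_combination h21
    · linear_combination ((1+Complex.I)/2)*h10 + (X 1 0/2) * Complex.I_sq
    · linear_combination (-1/2)*h00 + (Complex.I/2)*h11 + (X 1 1/2) * Complex.I_sq
    · linear_combination h12
    · linear_combination ((-1+Complex.I)/2)*h22 + (X 2 2/2) * Complex.I_sq
  · rintro ⟨a, b, rfl⟩
    constructor
    · simp [Matrix.trace_fin_three]
    · rw [tau_entries]
      ext i j
      fin_cases i <;> fin_cases j <;> simp <;> ring_nf <;> simp [Complex.I_sq]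

theorem pm_i_eigenspaces :
    -- the (-i)-eigenspace is { [[0,0,-ia],[0,0,b],[-ib,a,0]] }
    (Eneg = {X | ∃ a b : ℂ,
      X = !![0, 0, -(Complex.I * a); 0, 0, b; -(Complex.I * b), a, 0]}) ∧
    -- the (+i)-eigenspace is { [[0,0,ia],[0,0,b],[ib,a,0]] }
    (Epos = {X | ∃ a b : ℂ,
      X = !![0, 0, Complex.I * a; 0, 0, b; Complex.I * b, a, 0]}) ∧
    -- the (+i)-eigenspace is the image of the (-i)-eigenspace under X ↦ -X*
    (Epos = (fun X : Matrix (Fin 3) (Fin 3) ℂ => -Xᴴ) '' Eneg) := by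
  refine ⟨Eneg_eq, Epos_eq, ?_⟩
  rw [Epos_eq, Eneg_eq]
  ext X
  constructor
  · rintro ⟨a, b, rfl⟩
    refine ⟨!![0, 0, -(Complex.I * (-(starRingEnd ℂ) b)); 0, 0, -(starRingEnd ℂ) a;
      -(Complex.I * (-(starRingEnd ℂ) a)), -(starRingEnd ℂ) b, 0],
      ⟨-(starRingEnd ℂ) b, -(starRingEnd ℂ) a, rfl⟩, ?_⟩
    ext i j
    fin_cases i <;> fin_cases j <;>
      simp [Matrix.conjTranspose_apply, _root_.map_mul, Complex.conj_I, Complex.conj_conj] <;> ring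
  · rintro ⟨Y, ⟨a, b, rfl⟩, rfl⟩
    refine ⟨-(starRingEnd ℂ) b, -(starRingEnd ℂ) a, ?_⟩
    ext i j
    fin_cases i <;> fin_cases j <;>
      simp [Matrix.conjTranspose_apply, _root_.map_mul, Complex.conj_I, Complex.conj_conj] <;> ring
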